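/- Let ψ be a pure n-qubit state and define M_ψ := {y in F_2^{2n} : tr(|ψ⟩⟨ψ| P_y)^2 > 1/2}. Then M_ψ is isotropic with respect to the symplectic form: for all x, y in M_ψ, [x,y] = 0, where [x,y] is the symplectic inner product. Consequently |M_ψ| ≤ 2^n. -/

import Mathlib

open scoped Classical

/-- The phaseless Pauli operator `P_(a,b) = i^(a·b) X^a Z^b` on `n` qubits. -/
noncomputable def pauliOp (n : ℕ) (a b : Fin n → ZMod 2) :
    Matrix (Fin n → ZMod 2) (Fin n → ZMod 2) ℂ :=
  fun u v =>
    Complex.I ^ (∑ i, (a i).val * (b i).val) *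
      (if u = a + v then 1 else 0) *
      (-1 : ℂ) ^ (∑ i, (b i).val * (v i).val)

/-- The expectation value `⟨ψ| P_(a,b) |ψ⟩ = tr(|ψ⟩⟨ψ| P_(a,b))`. -/
noncomputable def pauliExp (n : ℕ) (ψ : (Fin n → ZMod 2) → ℂ)
    (a b : Fin n → ZMod 2) : ℂ :=
  ∑ u, ∑ v, (starRingEnd ℂ) (ψ u) * pauliOp n a b u v * ψ v

noncomputable def sgn (t : ZMod 2) : ℂ := (-1) ^ t.val

lemma zm2 : ∀ u : ZMod 2, u = 0 ∨ u = 1 := by decide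

lemma sgn_zero : sgn 0 = 1 := rfl
lemma sgn_one : sgn 1 = -1 := by
  show ((-1:ℂ))^(1:ZMod 2).val = -1
  norm_num [ZMod.val_one]

lemma sgn_add (s t : ZMod 2) : sgn (s + t) = sgn s * sgn t := by
  rcases zm2 s with rfl|rfl <;> rcases zm2 t with rfl|rfl <;>
    simp [sgn_zero, sgn_one, show ((1:ZMod 2)+1) = 0 from by decide]

lemma sgn_sq (t : ZMod 2) : sgn t * sgn t = 1 := by
  rcases zm2 t with rfl|rfl <;> simp [sgn_zero, sgn_one]

lemma sgn_add_eq_zero {s t : ZMod 2} (h : s + t = 1) : sgn s + sgn t = 0 := by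
  rcases zm2 s with rfl|rfl <;> rcases zm2 t with rfl|rfl <;>
    simp_all [sgn_zero, sgn_one]

lemma conj_sgn (t : ZMod 2) : (starRingEnd ℂ) (sgn t) = sgn t := by
  rcases zm2 t with rfl|rfl <;> simp [sgn_zero, sgn_one]

lemma abs_sgn (t : ZMod 2) : ‖sgn t‖ = 1 := by
  rcases zm2 t with rfl|rfl <;> simp [sgn_zero, sgn_one]

lemma neg_one_pow_cast (m : ℕ) : ((-1 : ℂ)) ^ m = sgn (m : ZMod 2) := by
  unfold sgn
  rw [ZMod.val_natCast]
  rcases Nat.even_or_odd m with h|h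
  · rw [Nat.even_iff.mp h, h.neg_one_pow, pow_zero]
  · rw [Nat.odd_iff.mp h, h.neg_one_pow, pow_one]

def dz {n : ℕ} (b v : Fin n → ZMod 2) : ZMod 2 := ∑ i, b i * v i

lemma dz_cast {n : ℕ} (b v : Fin n → ZMod 2) :
    ((∑ i, (b i).val * (v i).val : ℕ) : ZMod 2) = dz b v := by
  unfold dz
  push_cast
  simp [ZMod.natCast_val, ZMod.cast_id]

lemma neg_one_pow_dz {n : ℕ} (b v : Fin n → ZMod 2) :
    ((-1 : ℂ)) ^ (∑ i, (b i).val * (v i).val) = sgn (dz b v) := by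
  rw [neg_one_pow_cast, dz_cast]

lemma dz_comm {n : ℕ} (b v : Fin n → ZMod 2) : dz b v = dz v b := by
  unfold dz; simp [mul_comm]

lemma dz_add_right {n : ℕ} (b v w : Fin n → ZMod 2) :
    dz b (v + w) = dz b v + dz b w := by
  unfold dz; simp [mul_add, Finset.sum_add_distrib]

lemma dz_add_left {n : ℕ} (b c v : Fin n → ZMod 2) :
    dz (b + c) v = dz b v + dz c v := by
  unfold dz; simp [add_mul, Finset.sum_add_distrib]

lemma dz_zero_left {n : ℕ} (v : Fin n → ZMod 2) : dz 0 v = 0 := by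
  unfold dz; simp

lemma dz_zero_right {n : ℕ} (v : Fin n → ZMod 2) : dz v 0 = 0 := by
  unfold dz; simp

def dd {n : ℕ} (a b : Fin n → ZMod 2) : ℕ := ∑ i, (a i).val * (b i).val

noncomputable def PA {n : ℕ} (a b : Fin n → ZMod 2) (ψ : (Fin n → ZMod 2) → ℂ) :
    (Fin n → ZMod 2) → ℂ :=
  fun u => Complex.I ^ (dd a b) * sgn (dz b (u + a)) * ψ (u + a)

lemma add_self_zero {n : ℕ} (a : Fin n → ZMod 2) : a + a = 0 := by
  funext i
  rcases zm2 (a i) with h|h <;> simp [h] <;> decide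

lemma exp_eq {n : ℕ} (ψ : (Fin n → ZMod 2) → ℂ) (a b : Fin n → ZMod 2) :
    pauliExp n ψ a b = ∑ u, (starRingEnd ℂ) (ψ u) * PA a b ψ u := by
  unfold pauliExp pauliOp PA dd
  refine Finset.sum_congr rfl fun u _ => ?_
  rw [Finset.sum_eq_single (u + a)]
  · have h1 : u = a + (u + a) := by
      rw [add_comm a, add_assoc, add_self_zero, add_zero]
    rw [if_pos h1, neg_one_pow_dz]
    ring
  · intro v _ hv
    have h2 : u ≠ a + v := by
      intro h
      exact hv (by rw [h, add_comm a v, add_assoc, add_self_zero, add_zero])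
    rw [if_neg h2]; ring
  · intro h; exact absurd (Finset.mem_univ _) h

lemma inner_PA {n : ℕ} (ψ : (Fin n → ZMod 2) → ℂ) (a₁ b₁ a₂ b₂ : Fin n → ZMod 2) :
    ∑ u, (starRingEnd ℂ) (PA a₁ b₁ ψ u) * PA a₂ b₂ ψ u
      = (-1 : ℂ) ^ dd a₁ b₁ * Complex.I ^ dd a₁ b₁ * Complex.I ^ dd a₂ b₂ *
          sgn (dz b₂ a₁ + dz b₂ a₂) *
          ∑ u, sgn (dz b₁ u + dz b₂ u) * ((starRingEnd ℂ) (ψ u) * ψ (u + (a₁ + a₂))) := by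
  rw [Finset.mul_sum,
    ← Equiv.sum_comp (Equiv.addRight a₁)
      (fun u => (starRingEnd ℂ) (PA a₁ b₁ ψ u) * PA a₂ b₂ ψ u)]
  refine Finset.sum_congr rfl fun u _ => ?_
  simp only [Equiv.coe_addRight, PA]
  have e1 : u + a₁ + a₁ = u := by rw [add_assoc, add_self_zero, add_zero]
  have e2 : u + a₁ + a₂ = u + (a₁ + a₂) := by rw [add_assoc]
  rw [e1, e2, map_mul, map_mul, map_pow, Complex.conj_I, conj_sgn, neg_pow,
    dz_add_right b₂ u, dz_add_right b₂ a₁, sgn_add (dz b₂ u), sgn_add (dz b₂ a₁),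
    sgn_add (dz b₁ u)]
  ring

lemma PA_zero {n : ℕ} (ψ : (Fin n → ZMod 2) → ℂ) : PA (0 : Fin n → ZMod 2) 0 ψ = ψ := by
  funext u
  simp [PA, dd, dz_zero_left, sgn_zero]

lemma exp_normal {n : ℕ} (ψ : (Fin n → ZMod 2) → ℂ) (a b : Fin n → ZMod 2) :
    pauliExp n ψ a b = Complex.I ^ dd a b * sgn (dz b a) *
      ∑ u, sgn (dz b u) * ((starRingEnd ℂ) (ψ u) * ψ (u + a)) := by
  have h := inner_PA ψ 0 0 a b
  rw [PA_zero] at h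
  rw [exp_eq, h]
  simp [dd, dz_zero_left, dz_zero_right, sgn_zero]

lemma conj_sigma {n : ℕ} (ψ : (Fin n → ZMod 2) → ℂ) (a b : Fin n → ZMod 2) :
    (starRingEnd ℂ) (∑ u, sgn (dz b u) * ((starRingEnd ℂ) (ψ u) * ψ (u + a)))
      = sgn (dz b a) * ∑ u, sgn (dz b u) * ((starRingEnd ℂ) (ψ u) * ψ (u + a)) := by
  rw [map_sum, Finset.mul_sum,
    ← Equiv.sum_comp (Equiv.addRight a)
      (fun u => (starRingEnd ℂ) (sgn (dz b u) * ((starRingEnd ℂ) (ψ u) * ψ (u + a))))]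
  refine Finset.sum_congr rfl fun u _ => ?_
  simp only [Equiv.coe_addRight]
  have e1 : u + a + a = u := by rw [add_assoc, add_self_zero, add_zero]
  rw [e1, map_mul, map_mul, conj_sgn, Complex.conj_conj, dz_add_right, sgn_add]
  ring

lemma exp_real {n : ℕ} (ψ : (Fin n → ZMod 2) → ℂ) (a b : Fin n → ZMod 2) :
    (starRingEnd ℂ) (pauliExp n ψ a b) = pauliExp n ψ a b := by
  rw [exp_normal, map_mul, map_mul, map_pow, Complex.conj_I, conj_sgn, conj_sigma,
    neg_pow]
  have hd : ((-1 : ℂ)) ^ dd a b = sgn (dz b a) := by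
    rw [show dd a b = ∑ i, (a i).val * (b i).val from rfl, neg_one_pow_dz, dz_comm]
  rw [hd]
  have := sgn_sq (dz b a)
  calc sgn (dz b a) * Complex.I ^ dd a b * sgn (dz b a) *
        (sgn (dz b a) * ∑ u, sgn (dz b u) * ((starRingEnd ℂ) (ψ u) * ψ (u + a)))
      = (sgn (dz b a) * sgn (dz b a)) * (sgn (dz b a) * Complex.I ^ dd a b *
        ∑ u, sgn (dz b u) * ((starRingEnd ℂ) (ψ u) * ψ (u + a))) := by ring
    _ = _ := by rw [this]; ring

lemma anticomm {n : ℕ} (ψ : (Fin n → ZMod 2) → ℂ) (a₁ b₁ a₂ b₂ : Fin n → ZMod 2)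
    (h : dz a₁ b₂ + dz b₁ a₂ = 1) :
    (∑ u, (starRingEnd ℂ) (PA a₁ b₁ ψ u) * PA a₂ b₂ ψ u)
      + (∑ u, (starRingEnd ℂ) (PA a₂ b₂ ψ u) * PA a₁ b₁ ψ u) = 0 := by
  rw [inner_PA, inner_PA]
  have hswap : (fun u => sgn (dz b₂ u + dz b₁ u) *
      ((starRingEnd ℂ) (ψ u) * ψ (u + (a₂ + a₁))))
      = fun u => sgn (dz b₁ u + dz b₂ u) * ((starRingEnd ℂ) (ψ u) * ψ (u + (a₁ + a₂))) := by
    funext u; rw [add_comm (dz b₂ u), add_comm a₂]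
  rw [hswap]
  have h1 : ((-1 : ℂ)) ^ dd a₁ b₁ = sgn (dz a₁ b₁) := by
    rw [show dd a₁ b₁ = ∑ i, (a₁ i).val * (b₁ i).val from rfl, neg_one_pow_dz]
  have h2 : ((-1 : ℂ)) ^ dd a₂ b₂ = sgn (dz a₂ b₂) := by
    rw [show dd a₂ b₂ = ∑ i, (a₂ i).val * (b₂ i).val from rfl, neg_one_pow_dz]
  rw [h1, h2]
  have key : sgn (dz a₁ b₁) * sgn (dz b₂ a₁ + dz b₂ a₂)
      + sgn (dz a₂ b₂) * sgn (dz b₁ a₂ + dz b₁ a₁) = 0 := by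
    rw [← sgn_add, ← sgn_add]
    apply sgn_add_eq_zero
    have c1 : dz b₂ a₁ = dz a₁ b₂ := dz_comm _ _
    have c2 : dz a₁ b₁ = dz b₁ a₁ := dz_comm _ _
    have c3 : dz b₂ a₂ = dz a₂ b₂ := dz_comm _ _
    rw [c1, c2, c3]
    have hc : ∀ t : ZMod 2, t + t = 0 := by decide
    calc dz b₁ a₁ + (dz a₁ b₂ + dz a₂ b₂) + (dz a₂ b₂ + (dz b₁ a₂ + dz b₁ a₁))
        = (dz a₁ b₂ + dz b₁ a₂) + (dz b₁ a₁ + dz b₁ a₁) + (dz a₂ b₂ + dz a₂ b₂) := by ring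
      _ = 1 := by rw [hc, hc, h]; ring
  calc sgn (dz a₁ b₁) * Complex.I ^ dd a₁ b₁ * Complex.I ^ dd a₂ b₂ *
        sgn (dz b₂ a₁ + dz b₂ a₂) *
        (∑ u, sgn (dz b₁ u + dz b₂ u) * ((starRingEnd ℂ) (ψ u) * ψ (u + (a₁ + a₂))))
      + sgn (dz a₂ b₂) * Complex.I ^ dd a₂ b₂ * Complex.I ^ dd a₁ b₁ *
        sgn (dz b₁ a₂ + dz b₁ a₁) *
        (∑ u, sgn (dz b₁ u + dz b₂ u) * ((starRingEnd ℂ) (ψ u) * ψ (u + (a₁ + a₂))))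
      = (sgn (dz a₁ b₁) * sgn (dz b₂ a₁ + dz b₂ a₂)
          + sgn (dz a₂ b₂) * sgn (dz b₁ a₂ + dz b₁ a₁)) *
        (Complex.I ^ dd a₁ b₁ * Complex.I ^ dd a₂ b₂ *
        ∑ u, sgn (dz b₁ u + dz b₂ u) * ((starRingEnd ℂ) (ψ u) * ψ (u + (a₁ + a₂)))) := by
        ring
    _ = 0 := by rw [key]; ring

lemma PA_norm {n : ℕ} (ψ : (Fin n → ZMod 2) → ℂ) (a b : Fin n → ZMod 2) :
    ∑ u, ‖PA a b ψ u‖ ^ 2 = ∑ u, ‖ψ u‖ ^ 2 := by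
  rw [← Equiv.sum_comp (Equiv.addRight a) (fun u => ‖ψ u‖ ^ 2)]
  refine Finset.sum_congr rfl fun u _ => ?_
  simp only [Equiv.coe_addRight, PA]
  rw [norm_mul, norm_mul, abs_sgn, norm_pow, Complex.norm_I]
  ring

lemma es_inner {n : ℕ} (f g : (Fin n → ZMod 2) → ℂ) :
    (inner ℂ ((WithLp.equiv 2 ((Fin n → ZMod 2) → ℂ)).symm f)
      ((WithLp.equiv 2 ((Fin n → ZMod 2) → ℂ)).symm g) : ℂ)
      = ∑ u, (starRingEnd ℂ) (f u) * g u := by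
  simp [PiLp.inner_apply, RCLike.inner_apply, WithLp.equiv_symm_apply, PiLp.toLp_apply, mul_comm]

lemma es_norm {n : ℕ} (f : (Fin n → ZMod 2) → ℂ) :
    ‖(WithLp.equiv 2 ((Fin n → ZMod 2) → ℂ)).symm f‖
      = Real.sqrt (∑ u, ‖f u‖ ^ 2) := by
  rw [EuclideanSpace.norm_eq]
  simp [WithLp.equiv_symm_apply, PiLp.toLp_apply]

lemma sq_le_self_imp {t : ℝ} (h0 : 0 ≤ t) (h : t ^ 2 ≤ t) : t ≤ 1 := by nlinarith

open scoped ComplexInnerProductSpace in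
lemma key_ineq {n : ℕ} (ψ : (Fin n → ZMod 2) → ℂ)
    (hψ : ∑ x, ‖ψ x‖ ^ 2 = 1)
    (a₁ b₁ a₂ b₂ : Fin n → ZMod 2) (h : dz a₁ b₂ + dz b₁ a₂ = 1) :
    ‖pauliExp n ψ a₁ b₁‖ ^ 2 + ‖pauliExp n ψ a₂ b₂‖ ^ 2 ≤ 1 := by
  set Ψ : EuclideanSpace ℂ (Fin n → ZMod 2) :=
    (WithLp.equiv 2 ((Fin n → ZMod 2) → ℂ)).symm ψ with hΨdef
  set P : EuclideanSpace ℂ (Fin n → ZMod 2) :=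
    (WithLp.equiv 2 ((Fin n → ZMod 2) → ℂ)).symm (PA a₁ b₁ ψ) with hPdef
  set Q : EuclideanSpace ℂ (Fin n → ZMod 2) :=
    (WithLp.equiv 2 ((Fin n → ZMod 2) → ℂ)).symm (PA a₂ b₂ ψ) with hQdef
  set a : ℝ := (pauliExp n ψ a₁ b₁).re with ha
  set b : ℝ := (pauliExp n ψ a₂ b₂).re with hb
  have hre1 : pauliExp n ψ a₁ b₁ = (a : ℂ) :=
    (Complex.conj_eq_iff_re.mp (exp_real ψ a₁ b₁)).symm
  have hre2 : pauliExp n ψ a₂ b₂ = (b : ℂ) :=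
    (Complex.conj_eq_iff_re.mp (exp_real ψ a₂ b₂)).symm
  have hnΨ : ‖Ψ‖ = 1 := by rw [hΨdef, es_norm, hψ, Real.sqrt_one]
  have hnP : ‖P‖ = 1 := by rw [hPdef, es_norm, PA_norm, hψ, Real.sqrt_one]
  have hnQ : ‖Q‖ = 1 := by rw [hQdef, es_norm, PA_norm, hψ, Real.sqrt_one]
  have hiP : ⟪Ψ, P⟫ = (a : ℂ) := by
    rw [hΨdef, hPdef, es_inner, ← exp_eq, hre1]
  have hiQ : ⟪Ψ, Q⟫ = (b : ℂ) := by
    rw [hΨdef, hQdef, es_inner, ← exp_eq, hre2]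
  have hPQ : ⟪P, Q⟫ + ⟪Q, P⟫ = 0 := by
    rw [hPdef, hQdef, es_inner, es_inner]
    exact anticomm ψ a₁ b₁ a₂ b₂ h
  set T : EuclideanSpace ℂ (Fin n → ZMod 2) := (a : ℂ) • P + (b : ℂ) • Q with hT
  have hΨT : ⟪Ψ, T⟫ = ((a ^ 2 + b ^ 2 : ℝ) : ℂ) := by
    rw [hT, inner_add_right, inner_smul_right, inner_smul_right, hiP, hiQ]
    push_cast
    ring
  have hTT : ⟪T, T⟫ = ((a ^ 2 + b ^ 2 : ℝ) : ℂ) := by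
    rw [hT, inner_add_right, inner_add_left, inner_add_left,
      inner_smul_left, inner_smul_left, inner_smul_left, inner_smul_left,
      inner_smul_right, inner_smul_right, inner_smul_right, inner_smul_right]
    rw [inner_self_eq_norm_sq_to_K (𝕜 := ℂ) P, inner_self_eq_norm_sq_to_K (𝕜 := ℂ) Q,
      hnP, hnQ]
    simp only [Complex.conj_ofReal]
    push_cast
    linear_combination (a : ℂ) * (b : ℂ) * hPQ
  have hnT : ‖T‖ ^ 2 = a ^ 2 + b ^ 2 := by
    have h1 : ((‖T‖ ^ 2 : ℝ) : ℂ) = ((a ^ 2 + b ^ 2 : ℝ) : ℂ) := by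
      rw [← hTT, inner_self_eq_norm_sq_to_K (𝕜 := ℂ) T]
      norm_cast
    exact_mod_cast h1
  have hCS : ‖⟪Ψ, T⟫‖ ≤ ‖Ψ‖ * ‖T‖ := norm_inner_le_norm Ψ T
  rw [hΨT, hnΨ, one_mul] at hCS
  have habs : ‖((a ^ 2 + b ^ 2 : ℝ) : ℂ)‖ = a ^ 2 + b ^ 2 := by
    rw [Complex.norm_real, Real.norm_eq_abs,
      abs_of_nonneg (add_nonneg (sq_nonneg a) (sq_nonneg b))]
  rw [habs] at hCS
  have ht : a ^ 2 + b ^ 2 ≤ 1 := by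
    have h2 : (a ^ 2 + b ^ 2) ^ 2 ≤ ‖T‖ ^ 2 :=
      pow_le_pow_left₀ (add_nonneg (sq_nonneg a) (sq_nonneg b)) hCS 2
    rw [hnT] at h2
    exact sq_le_self_imp (add_nonneg (sq_nonneg a) (sq_nonneg b)) h2
  calc ‖pauliExp n ψ a₁ b₁‖ ^ 2 + ‖pauliExp n ψ a₂ b₂‖ ^ 2
      = a ^ 2 + b ^ 2 := by
        rw [hre1, hre2, Complex.norm_real, Complex.norm_real, Real.norm_eq_abs, Real.norm_eq_abs,
            sq_abs, sq_abs]
    _ ≤ 1 := ht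

lemma dz_smul_left {n : ℕ} (c : ZMod 2) (v w : Fin n → ZMod 2) :
    dz (c • v) w = c * dz v w := by
  unfold dz
  simp [Finset.mul_sum, mul_assoc]

lemma dz_smul_right {n : ℕ} (c : ZMod 2) (v w : Fin n → ZMod 2) :
    dz v (c • w) = c * dz v w := by
  rw [dz_comm, dz_smul_left, dz_comm]

noncomputable def sympB (n : ℕ) :
    LinearMap.BilinForm (ZMod 2) ((Fin n → ZMod 2) × (Fin n → ZMod 2)) :=
  LinearMap.mk₂ (ZMod 2) (fun x y => dz x.1 y.2 + dz x.2 y.1)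
    (fun x x' y => by simp [dz_add_left]; ring)
    (fun c x y => by simp [Prod.smul_fst, Prod.smul_snd, dz_smul_left]; ring)
    (fun x y y' => by simp [dz_add_right]; ring)
    (fun c x y => by simp [Prod.smul_fst, Prod.smul_snd, dz_smul_right]; ring)

lemma sympB_apply {n : ℕ} (x y : (Fin n → ZMod 2) × (Fin n → ZMod 2)) :
    sympB n x y = dz x.1 y.2 + dz x.2 y.1 := rfl

lemma sympB_refl (n : ℕ) : (sympB n).IsRefl := by
  intro x y h
  rw [sympB_apply] at h ⊢
  rw [dz_comm y.1 x.2, dz_comm y.2 x.1, add_comm]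
  exact h

lemma dz_single {n : ℕ} (v : Fin n → ZMod 2) (i : Fin n) :
    dz v (Pi.single i 1) = v i := by
  unfold dz
  simp [Pi.single_apply]

lemma sympB_nondeg (n : ℕ) : (sympB n).Nondegenerate := by
  have hl : LinearMap.SeparatingLeft (sympB n) := by
    intro x hx
    have h1 : x.1 = 0 := by
      funext i
      have := hx (0, Pi.single i 1)
      rw [sympB_apply] at this
      simpa [dz_single, dz_zero_right] using this
    have h2 : x.2 = 0 := by
      funext i
      have := hx (Pi.single i 1, 0)
      rw [sympB_apply] at this
      simpa [dz_single, dz_zero_right] using this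
    exact Prod.ext h1 h2
  exact ⟨hl, fun y hy => hl y fun x => sympB_refl n x y (hy x)⟩

lemma finrank_V (n : ℕ) :
    Module.finrank (ZMod 2) ((Fin n → ZMod 2) × (Fin n → ZMod 2)) = n + n := by
  rw [Module.finrank_prod, Module.finrank_pi]
  simp

lemma card_bound (n : ℕ) (M : Set ((Fin n → ZMod 2) × (Fin n → ZMod 2)))
    (hM : ∀ x ∈ M, ∀ y ∈ M, sympB n x y = 0) :
    Nat.card M ≤ 2 ^ n := by
  set W := Submodule.span (ZMod 2) M with hW
  have h1 : ∀ y ∈ M, ∀ w ∈ W, sympB n w y = 0 := by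
    intro y hy w hw
    have hle : W ≤ LinearMap.ker ((sympB n).flip y) :=
      Submodule.span_le.mpr (fun x hx => by
        simpa using hM x hx y hy)
    simpa using hle hw
  have h2 : ∀ w ∈ W, ∀ w' ∈ W, sympB n w w' = 0 := by
    intro w hw w' hw'
    have hle : W ≤ LinearMap.ker (sympB n w) :=
      Submodule.span_le.mpr (fun y hy => by
        simpa using h1 y hy w hw)
    simpa using hle hw'
  have hWle : W ≤ (sympB n).orthogonal W := fun m hm u hu => h2 u hu m hm
  have hrank : Module.finrank (ZMod 2) W ≤ n := by
    have hfr := LinearMap.BilinForm.finrank_orthogonal (sympB_nondeg n) W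
    have hle := Submodule.finrank_mono hWle
    have hVle := Submodule.finrank_le W
    rw [finrank_V] at hfr hVle
    omega
  have hcardW : Nat.card W = 2 ^ Module.finrank (ZMod 2) W := by
    have : Fintype W := Fintype.ofFinite W
    rw [Nat.card_eq_fintype_card, Module.card_eq_pow_finrank (K := ZMod 2) (V := W)]
    simp
  have hsub : M ⊆ (W : Set _) := Submodule.subset_span
  calc Nat.card M ≤ Nat.card W := Nat.card_mono (Set.toFinite _) hsub
    _ = 2 ^ Module.finrank (ZMod 2) W := hcardW
    _ ≤ 2 ^ n := Nat.pow_le_pow_right (by norm_num) hrank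

/-- The set `M_ψ = {y ∈ F_2^{2n} : tr(|ψ⟩⟨ψ| P_y)² > 1/2}`. -/
noncomputable def Mpsi (n : ℕ) (ψ : (Fin n → ZMod 2) → ℂ) :
    Set ((Fin n → ZMod 2) × (Fin n → ZMod 2)) :=
  {x | 1 / 2 < ‖pauliExp n ψ x.1 x.2‖ ^ 2}

theorem stmt_16 (n : ℕ) (ψ : (Fin n → ZMod 2) → ℂ)
    (hψ : ∑ x, ‖ψ x‖ ^ 2 = 1) :
    (∀ x ∈ Mpsi n ψ, ∀ y ∈ Mpsi n ψ,
      (∑ i, x.1 i * y.2 i) + (∑ i, x.2 i * y.1 i) = 0) ∧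
    Nat.card (Mpsi n ψ) ≤ 2 ^ n := by
  have part1 : ∀ x ∈ Mpsi n ψ, ∀ y ∈ Mpsi n ψ,
      (∑ i, x.1 i * y.2 i) + (∑ i, x.2 i * y.1 i) = 0 := by
    intro x hx y hy
    by_contra hne
    have h1 : dz x.1 y.2 + dz x.2 y.1 = 1 := by
      rcases zm2 (dz x.1 y.2 + dz x.2 y.1) with h|h
      · exact absurd h hne
      · exact h
    have hkey := key_ineq ψ hψ x.1 x.2 y.1 y.2 h1
    have hx' : 1 / 2 < ‖pauliExp n ψ x.1 x.2‖ ^ 2 := hx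
    have hy' : 1 / 2 < ‖pauliExp n ψ y.1 y.2‖ ^ 2 := hy
    linarith
  refine ⟨part1, ?_⟩
  exact card_bound n (Mpsi n ψ)
    (fun x hx y hy => by rw [sympB_apply]; exact part1 x hx y hy)
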